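/- arXiv:2005.13579 — 6 statements merged into one kernel-verified Lean document; each statement's English description precedes it below -/
import Mathlib

section
/- For any geodesic metric space X and integer n ≥ 2, for each finite set A ⊆ X with 1 ≤ |A| ≤ n, there exists a finite set B ⊆ X with 1 ≤ |B| ≤ n−1 such that d_H(A, B) ≤ δ_n(A)/2. -/
open Metric Set

/-- Minimum separation: min pairwise distance among points of `A` if `|A| = n`, else 0. -/
noncomputable def minSep {X : Type*} [MetricSpace X] (n : ℕ) (A : Finset X) : ℝ :=
  if A.card = n then
    sInf {d : ℝ | ∃ p ∈ A, ∃ q ∈ A, p ≠ q ∧ dist p q = d}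
  else 0

theorem stmt1 {X : Type*} [MetricSpace X]
    (hgeo : ∀ p q : X, ∃ γ : ℝ → X, γ 0 = p ∧ γ 1 = q ∧
      ∀ s ∈ Icc (0:ℝ) 1, ∀ t ∈ Icc (0:ℝ) 1, dist (γ s) (γ t) = |s - t| * dist p q)
    (n : ℕ) (hn : 2 ≤ n)
    (A : Finset X) (hA : A.Nonempty) (hcard : A.card ≤ n) :
    ∃ B : Finset X, B.Nonempty ∧ B.card ≤ n - 1 ∧
      hausdorffDist (A : Set X) (B : Set X) ≤ minSep n A / 2 := by
  classical
  by_cases hAn : A.card = n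
  · -- |A| = n : remove the two closest points, insert their midpoint
    set S : Set ℝ := {d : ℝ | ∃ p ∈ A, ∃ q ∈ A, p ≠ q ∧ dist p q = d} with hS
    have hSfin : S.Finite := by
      apply Set.Finite.subset (Set.Finite.image (fun pq : X × X => dist pq.1 pq.2)
        ((A.finite_toSet.prod A.finite_toSet)))
      rintro d ⟨p, hp, q, hq, _, rfl⟩
      exact ⟨(p, q), ⟨hp, hq⟩, rfl⟩
    have hSne : S.Nonempty := by
      obtain ⟨p, hp⟩ := hA
      have h1 : 1 < A.card := lt_of_lt_of_le one_lt_two (hAn ▸ hn)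
      obtain ⟨q, hq, hqp⟩ := Finset.exists_mem_ne h1 p
      exact ⟨dist q p, q, hq, p, hp, hqp, rfl⟩
    have hmem : sInf S ∈ S := hSne.csInf_mem hSfin
    obtain ⟨p, hp, q, hq, hpq, hdist⟩ := hmem
    have hminSep : minSep n A = dist p q := by rw [minSep, if_pos hAn, hdist]
    obtain ⟨γ, hγ0, hγ1, hγd⟩ := hgeo p q
    set m := γ (1/2) with hm
    have h0 : (0:ℝ) ∈ Icc (0:ℝ) 1 := by norm_num
    have h1 : (1:ℝ) ∈ Icc (0:ℝ) 1 := by norm_num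
    have hh : (1/2:ℝ) ∈ Icc (0:ℝ) 1 := by norm_num
    have hpm : dist p m = dist p q / 2 := by
      have := hγd 0 h0 (1/2) hh
      rw [hγ0] at this
      rw [this]; rw [show |(0:ℝ) - 1/2| = 1/2 by norm_num]; ring
    have hqm : dist q m = dist p q / 2 := by
      have := hγd 1 h1 (1/2) hh
      rw [hγ1] at this
      rw [this]; rw [show |(1:ℝ) - 1/2| = 1/2 by norm_num]; ring
    refine ⟨insert m ((A.erase p).erase q), ⟨m, Finset.mem_insert_self _ _⟩, ?_, ?_⟩
    · have hq' : q ∈ A.erase p := Finset.mem_erase.2 ⟨hpq.symm, hq⟩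
      have hc : ((A.erase p).erase q).card = n - 2 := by
        rw [Finset.card_erase_of_mem hq', Finset.card_erase_of_mem hp, hAn]; omega
      calc (insert m ((A.erase p).erase q)).card ≤ ((A.erase p).erase q).card + 1 :=
            Finset.card_insert_le _ _
        _ = n - 2 + 1 := by rw [hc]
        _ ≤ n - 1 := by omega
    · rw [hminSep]
      have hd2 : 0 ≤ dist p q / 2 := by positivity
      apply hausdorffDist_le_of_mem_dist hd2
      · intro x hx
        rcases eq_or_ne x p with rfl | hxp
        · exact ⟨m, by simp, le_of_eq hpm⟩
        rcases eq_or_ne x q with rfl | hxq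
        · exact ⟨m, by simp, le_of_eq hqm⟩
        · refine ⟨x, ?_, by simp [hd2]⟩
          simp only [Finset.coe_insert, Set.mem_insert_iff, Finset.mem_coe]
          exact Or.inr (Finset.mem_erase.2 ⟨hxq, Finset.mem_erase.2 ⟨hxp, hx⟩⟩)
      · intro x hx
        simp only [Finset.coe_insert, Set.mem_insert_iff, Finset.mem_coe] at hx
        rcases hx with rfl | hx
        · exact ⟨p, hp, by rw [dist_comm]; exact le_of_eq hpm⟩
        · exact ⟨x, Finset.mem_of_mem_erase (Finset.mem_of_mem_erase hx), by simp [hd2]⟩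
  · -- |A| < n : take B = A
    refine ⟨A, hA, ?_, ?_⟩
    · omega
    · rw [minSep, if_neg hAn, hausdorffDist_self_zero]
      norm_num
end

section
/- Let X and Y be metric spaces, 1 ≤ k < n, and suppose there exists an L-Lipschitz retraction r : X(n) → X(k). Suppose f : X → Y and g : Y → X are Lipschitz maps with f ∘ g = id_Y. Then there exists a Lipschitz retraction s : Y(n) → Y(k) with Lip(s) ≤ Lip(f)·Lip(g)·L. -/
open Metric

lemma lip_image_hdist {X Y : Type*} [MetricSpace X] [MetricSpace Y] (c : ℝ) (hc : 0 ≤ c)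
    (h : X → Y) (hh : ∀ x x', dist (h x) (h x') ≤ c * dist x x')
    (S T : Finset X) (hS : S.Nonempty) (hT : T.Nonempty) :
    hausdorffDist (h '' (S : Set X)) (h '' (T : Set X)) ≤ c * hausdorffDist (S : Set X) (T : Set X) := by
  have hne : EMetric.hausdorffEdist (S : Set X) (T : Set X) ≠ ⊤ :=
    hausdorffEdist_ne_top_of_nonempty_of_bounded (by simpa using hS) (by simpa using hT)
      S.finite_toSet.isBounded T.finite_toSet.isBounded
  have hne' : EMetric.hausdorffEdist (T : Set X) (S : Set X) ≠ ⊤ := by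
    rwa [EMetric.hausdorffEdist, Metric.hausdorffEDist_comm]
  apply hausdorffDist_le_of_mem_dist (mul_nonneg hc hausdorffDist_nonneg)
  · rintro _ ⟨a, ha, rfl⟩
    obtain ⟨b, hb, hab⟩ := T.finite_toSet.isCompact.exists_infDist_eq_dist (by simpa using hT) a
    refine ⟨h b, Set.mem_image_of_mem _ hb, ?_⟩
    calc dist (h a) (h b) ≤ c * dist a b := hh a b
      _ ≤ c * hausdorffDist (S : Set X) (T : Set X) := by
          apply mul_le_mul_of_nonneg_left _ hc
          rw [← hab]
          exact infDist_le_hausdorffDist_of_mem ha hne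
  · rintro _ ⟨b, hb, rfl⟩
    obtain ⟨a, ha, hab⟩ := S.finite_toSet.isCompact.exists_infDist_eq_dist (by simpa using hS) b
    refine ⟨h a, Set.mem_image_of_mem _ ha, ?_⟩
    calc dist (h b) (h a) ≤ c * dist b a := hh b a
      _ ≤ c * hausdorffDist (S : Set X) (T : Set X) := by
          apply mul_le_mul_of_nonneg_left _ hc
          rw [← hab, hausdorffDist_comm]
          exact infDist_le_hausdorffDist_of_mem hb hne'

theorem stmt3 {X Y : Type*} [MetricSpace X] [MetricSpace Y] (n k : ℕ) (hk : 1 ≤ k) (hkn : k < n)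
    (L Lf Lg : ℝ) (r : Finset X → Finset X)
    (hmaps : ∀ A : Finset X, A.Nonempty → A.card ≤ n → (r A).Nonempty ∧ (r A).card ≤ k)
    (hretr : ∀ B : Finset X, B.Nonempty → B.card ≤ k → r B = B)
    (hlip : ∀ A B : Finset X, A.Nonempty → A.card ≤ n → B.Nonempty → B.card ≤ n →
      hausdorffDist (r A : Set X) (r B : Set X) ≤ L * hausdorffDist (A : Set X) (B : Set X))
    (f : X → Y) (g : Y → X)
    (hLf : 0 ≤ Lf) (hLg : 0 ≤ Lg)
    (hf : ∀ x x' : X, dist (f x) (f x') ≤ Lf * dist x x')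
    (hg : ∀ y y' : Y, dist (g y) (g y') ≤ Lg * dist y y')
    (hfg : ∀ y : Y, f (g y) = y) :
    ∃ s : Finset Y → Finset Y,
      (∀ A : Finset Y, A.Nonempty → A.card ≤ n → (s A).Nonempty ∧ (s A).card ≤ k) ∧
      (∀ B : Finset Y, B.Nonempty → B.card ≤ k → s B = B) ∧
      (∀ A B : Finset Y, A.Nonempty → A.card ≤ n → B.Nonempty → B.card ≤ n →
        hausdorffDist (s A : Set Y) (s B : Set Y) ≤
          (Lf * Lg * L) * hausdorffDist (A : Set Y) (B : Set Y)) := by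
  classical
  refine ⟨fun A => (r (A.image g)).image f, ?_, ?_, ?_⟩
  · intro A hA hAn
    have h1 : (A.image g).Nonempty := hA.image g
    have h2 : (A.image g).card ≤ n := le_trans (Finset.card_image_le) hAn
    obtain ⟨hne, hcard⟩ := hmaps _ h1 h2
    exact ⟨hne.image f, le_trans Finset.card_image_le hcard⟩
  · intro B hB hBk
    have h1 : (B.image g).Nonempty := hB.image g
    have h2 : (B.image g).card ≤ k := le_trans (Finset.card_image_le) hBk
    show (r (B.image g)).image f = B
    rw [hretr _ h1 h2, Finset.image_image]
    have : f ∘ g = id := funext hfg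
    rw [this, Finset.image_id]
  · intro A B hA hAn hB hBn
    have hgA : (A.image g).Nonempty := hA.image g
    have hgB : (B.image g).Nonempty := hB.image g
    have hgAn : (A.image g).card ≤ n := le_trans Finset.card_image_le hAn
    have hgBn : (B.image g).card ≤ n := le_trans Finset.card_image_le hBn
    obtain ⟨hrA, _⟩ := hmaps _ hgA hgAn
    obtain ⟨hrB, _⟩ := hmaps _ hgB hgBn
    have hcoeA : ((A.image g : Finset X) : Set X) = g '' (A : Set Y) := Finset.coe_image
    have hcoeB : ((B.image g : Finset X) : Set X) = g '' (B : Set Y) := Finset.coe_image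
    have hfgA : f '' (g '' (A : Set Y)) = (A : Set Y) := by
      rw [Set.image_image]; simp [hfg]
    have hfgB : f '' (g '' (B : Set Y)) = (B : Set Y) := by
      rw [Set.image_image]; simp [hfg]
    have hstep1 : hausdorffDist (((r (A.image g)).image f : Finset Y) : Set Y)
        (((r (B.image g)).image f : Finset Y) : Set Y)
        ≤ Lf * hausdorffDist ((r (A.image g)) : Set X) ((r (B.image g)) : Set X) := by
      rw [Finset.coe_image, Finset.coe_image]
      exact lip_image_hdist Lf hLf f hf _ _ hrA hrB
    have hstep2 := hlip _ _ hgA hgAn hgB hgBn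
    have hstep3 : hausdorffDist ((A.image g : Finset X) : Set X) ((B.image g : Finset X) : Set X)
        ≤ Lg * hausdorffDist (A : Set Y) (B : Set Y) := by
      rw [hcoeA, hcoeB]
      exact lip_image_hdist Lg hLg g hg _ _ hA hB
    show hausdorffDist (((r (A.image g)).image f : Finset Y) : Set Y)
        (((r (B.image g)).image f : Finset Y) : Set Y)
        ≤ (Lf * Lg * L) * hausdorffDist (A : Set Y) (B : Set Y)
    rcases eq_or_lt_of_le (hausdorffDist_nonneg :
        (0:ℝ) ≤ hausdorffDist ((A.image g : Finset X) : Set X) ((B.image g : Finset X) : Set X))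
        with hzero | hpos
    · -- H(gA, gB) = 0 : both sides are forced to zero
      have hAB : hausdorffDist (A : Set Y) (B : Set Y) = 0 := by
        have h0 := lip_image_hdist Lf hLf f hf (A.image g) (B.image g) hgA hgB
        rw [hcoeA, hcoeB, hfgA, hfgB, ← hcoeA, ← hcoeB] at h0
        rw [← hzero] at h0
        simp at h0
        exact le_antisymm h0 hausdorffDist_nonneg
      have hrAB : hausdorffDist ((r (A.image g)) : Set X) ((r (B.image g)) : Set X) = 0 := by
        rw [← hzero] at hstep2
        simp at hstep2
        exact le_antisymm hstep2 hausdorffDist_nonneg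
      rw [hAB]
      rw [hrAB] at hstep1
      calc hausdorffDist (((r (A.image g)).image f : Finset Y) : Set Y)
            (((r (B.image g)).image f : Finset Y) : Set Y) ≤ Lf * 0 := hstep1
        _ = (Lf * Lg * L) * 0 := by ring
    · -- H(gA, gB) > 0 : deduce 0 ≤ L
      have hL : 0 ≤ L := by
        have h0 : (0:ℝ) ≤ L * hausdorffDist ((A.image g : Finset X) : Set X) ((B.image g : Finset X) : Set X) :=
          le_trans hausdorffDist_nonneg hstep2
        nlinarith
      calc hausdorffDist (((r (A.image g)).image f : Finset Y) : Set Y)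
            (((r (B.image g)).image f : Finset Y) : Set Y)
          ≤ Lf * hausdorffDist ((r (A.image g)) : Set X) ((r (B.image g)) : Set X) := hstep1
        _ ≤ Lf * (L * hausdorffDist ((A.image g : Finset X) : Set X) ((B.image g : Finset X) : Set X)) :=
            mul_le_mul_of_nonneg_left hstep2 hLf
        _ ≤ Lf * (L * (Lg * hausdorffDist (A : Set Y) (B : Set Y))) := by
            apply mul_le_mul_of_nonneg_left _ hLf
            exact mul_le_mul_of_nonneg_left hstep3 hL
        _ = (Lf * Lg * L) * hausdorffDist (A : Set Y) (B : Set Y) := by ring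
end

section
/- Let S¹ be the unit circle with the arclength (intrinsic) metric. For any integer n ≥ 2, any 1 ≤ k ≤ n−1, and any set A ⊆ S¹ with 1 ≤ |A| ≤ n, there exists a set B ⊆ S¹ with 1 ≤ |B| ≤ k such that d_H(A, B) ≤ π(n−1)/(kn). -/
open Metric Real

lemma distCoeLe {p : ℝ} (hp : 0 < p) (x y : ℝ) :
    dist ((x : ℝ) : AddCircle p) ((y : ℝ) : AddCircle p) ≤ |x - y| := by
  rw [dist_eq_norm]
  have h1 : ((x : AddCircle p) - (y : AddCircle p)) = ((x - y : ℝ) : AddCircle p) := by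
    norm_cast
  rw [h1, AddCircle.norm_eq' (p := p) hp]
  have h2 := round_le (p⁻¹ * (x - y)) 0
  simp only [Int.cast_zero, sub_zero] at h2
  calc p * |p⁻¹ * (x - y) - round (p⁻¹ * (x - y))| ≤ p * |p⁻¹ * (x - y)| := by
        exact mul_le_mul_of_nonneg_left h2 hp.le
    _ = |x - y| := by
        rw [abs_mul, abs_inv, abs_of_pos hp]; field_simp

lemma repCoe {p : ℝ} [hp : Fact (0 < p)] (a : AddCircle p) :
    (((AddCircle.equivIco p 0 a : ℝ)) : AddCircle p) = a :=
  (AddCircle.equivIco p 0).symm_apply_apply a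


lemma gapLemma (n : ℕ) (hn : 2 ≤ n) (A : Finset (AddCircle (2 * π)))
    (hA : A.Nonempty) (hcard : A.card ≤ n) :
    ∃ c : ℝ, ∀ a ∈ A, ∃ x : ℝ,
      ((x : ℝ) : AddCircle (2 * π)) = a ∧ c ≤ x ∧ x ≤ c + (2 * π - 2 * π / n) := by
  haveI : Fact ((0:ℝ) < 2 * π) := ⟨by positivity⟩
  have hπ : (0:ℝ) < 2 * π := by positivity
  have hn0 : (0:ℝ) < n := by positivity
  set rep : AddCircle (2 * π) → ℝ := fun a => (AddCircle.equivIco (2 * π) 0 a : ℝ) with hrep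
  have hrep_mem : ∀ a, 0 ≤ rep a ∧ rep a < 2 * π := by
    intro a
    have := (AddCircle.equivIco (2 * π) 0 a).2
    rw [Set.mem_Ico] at this
    exact ⟨this.1, by linarith [this.2]⟩
  have hrep_coe : ∀ a, ((rep a : ℝ) : AddCircle (2 * π)) = a := fun a =>
    (AddCircle.equivIco (2 * π) 0).symm_apply_apply a
  set T : Finset ℝ := A.image rep with hT
  have hTne : T.Nonempty := hA.image rep
  set m : ℕ := T.card with hm
  have hm1 : 1 ≤ m := Finset.card_pos.mpr hTne
  have hmn : m ≤ n := le_trans (Finset.card_image_le) hcard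
  have hTmem : ∀ t ∈ T, 0 ≤ t ∧ t < 2 * π := by
    intro t ht
    obtain ⟨a, _, rfl⟩ := Finset.mem_image.mp ht
    exact hrep_mem a
  set e := T.orderIsoOfFin (rfl : T.card = m) with he
  set f : ℕ → ℝ := fun i => (e ⟨min i (m - 1), lt_of_le_of_lt (min_le_right _ _)
      (Nat.pred_lt (Nat.one_le_iff_ne_zero.mp hm1))⟩ : ℝ) with hf
  have hfmono : Monotone f := by
    intro i j hij
    exact_mod_cast e.monotone (by simp [Fin.mk_le_mk]; omega)
  have hfT : ∀ i, f i ∈ T := fun i => (e _).2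
  have hsurj : ∀ t ∈ T, ∃ j, j ≤ m - 1 ∧ f j = t := by
    intro t ht
    set j : Fin m := e.symm ⟨t, ht⟩ with hjdef
    have hjle : (j : ℕ) ≤ m - 1 := Nat.le_pred_of_lt j.2
    refine ⟨(j : ℕ), hjle, ?_⟩
    have hlt' : (j : ℕ) ⊓ (m - 1) < m :=
      lt_of_le_of_lt (min_le_right _ _) (Nat.pred_lt (Nat.one_le_iff_ne_zero.mp hm1))
    have hfin : (⟨(j : ℕ) ⊓ (m - 1), hlt'⟩ : Fin m) = j := Fin.ext (min_eq_left hjle)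
    simp only [hf, hfin, hjdef]
    exact congrArg Subtype.val ((congrArg e hfin).trans (e.apply_symm_apply _))
  set D : ℝ := 2 * π / n with hD
  have hD0 : 0 < D := by positivity
  by_cases hcase : f (m - 1) ≤ f 0 + (2 * π - D)
  · -- no wrap needed
    refine ⟨f 0, fun a ha => ⟨rep a, hrep_coe a, ?_, ?_⟩⟩
    · obtain ⟨j, hj, hfj⟩ := hsurj (rep a) (Finset.mem_image_of_mem rep ha)
      rw [← hfj]; exact hfmono (Nat.zero_le j)
    · obtain ⟨j, hj, hfj⟩ := hsurj (rep a) (Finset.mem_image_of_mem rep ha)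
      rw [← hfj]
      exact le_trans (hfmono hj) hcase
  · push_neg at hcase
    -- find a big interior gap
    have hsum : ∑ i ∈ Finset.range (m - 1), (f (i + 1) - f i) = f (m - 1) - f 0 :=
      Finset.sum_range_sub f (m - 1)
    have hlt : ∑ i ∈ Finset.range (m - 1), D < ∑ i ∈ Finset.range (m - 1), (f (i + 1) - f i) := by
      rw [hsum, Finset.sum_const, Finset.card_range, nsmul_eq_mul]
      have hm1R : ((m - 1 : ℕ) : ℝ) ≤ (n : ℝ) - 1 := by
        have : ((m - 1 : ℕ) : ℝ) = (m : ℝ) - 1 := by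
          rw [Nat.cast_sub hm1]; norm_num
        rw [this]
        have : (m : ℝ) ≤ n := Nat.cast_le.mpr hmn
        linarith
      have h1 : ((m - 1 : ℕ) : ℝ) * D ≤ ((n : ℝ) - 1) * D :=
        mul_le_mul_of_nonneg_right hm1R hD0.le
      have h2 : ((n : ℝ) - 1) * D = 2 * π - D := by
        rw [hD]; field_simp
      linarith
    obtain ⟨i, hi, hgap⟩ := Finset.exists_lt_of_sum_lt hlt
    rw [Finset.mem_range] at hi
    refine ⟨f (i + 1), fun a ha => ?_⟩
    obtain ⟨j, hj, hfj⟩ := hsurj (rep a) (Finset.mem_image_of_mem rep ha)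
    have hfi0 : 0 ≤ f i := (hTmem _ (hfT i)).1
    have hfm : f (m - 1) < 2 * π := (hTmem _ (hfT (m - 1))).2
    have hrep0 : 0 ≤ rep a := (hrep_mem a).1
    by_cases hji : j ≤ i
    · -- wrap around: use rep a + 2π
      refine ⟨rep a + 2 * π, ?_, ?_, ?_⟩
      · rw [AddCircle.coe_add_period]
        exact hrep_coe a
      · have : f (i + 1) ≤ f (m - 1) := hfmono (by omega)
        linarith
      · have : rep a ≤ f i := by rw [← hfj]; exact hfmono hji
        linarith
    · push_neg at hji
      refine ⟨rep a, hrep_coe a, ?_, ?_⟩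
      · rw [← hfj]; exact hfmono hji
      · have h1 : rep a ≤ f (m - 1) := by rw [← hfj]; exact hfmono hj
        have h2 : D ≤ f (i + 1) := by linarith
        linarith


theorem stmt5 (n k : ℕ) (hn : 2 ≤ n) (hk : 1 ≤ k) (hkn : k ≤ n - 1)
    (A : Finset (AddCircle (2 * π))) (hA : A.Nonempty) (hcard : A.card ≤ n) :
    ∃ B : Finset (AddCircle (2 * π)), B.Nonempty ∧ B.card ≤ k ∧
      hausdorffDist (A : Set (AddCircle (2 * π))) (B : Set (AddCircle (2 * π))) ≤
        π * (n - 1) / (k * n) := by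
  have hπ : (0:ℝ) < 2 * π := by positivity
  have hn0 : (0:ℝ) < n := by positivity
  have hk0 : (0:ℝ) < k := by exact_mod_cast hk
  have hn1 : (1:ℝ) ≤ (n:ℝ) - 1 := by
    have : (2:ℝ) ≤ n := by exact_mod_cast hn
    linarith
  set r : ℝ := π * (n - 1) / (k * n) with hrdef
  have hr : 0 < r := by
    apply div_pos (mul_pos pi_pos (by linarith)) (mul_pos hk0 hn0)
  have h2rk : 2 * r * k = 2 * π - 2 * π / n := by
    rw [hrdef]; field_simp
  obtain ⟨c, hc⟩ := gapLemma n hn A hA hcard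
  have hc' : ∀ a : AddCircle (2 * π), ∃ x : ℝ, a ∈ A →
      ((x : ℝ) : AddCircle (2 * π)) = a ∧ c ≤ x ∧ x ≤ c + (2 * π - 2 * π / n) := by
    intro a
    by_cases h : a ∈ A
    · obtain ⟨x, hx⟩ := hc a h
      exact ⟨x, fun _ => hx⟩
    · exact ⟨0, fun h' => absurd h' h⟩
  choose g hg using hc'
  set jf : AddCircle (2 * π) → ℕ := fun a => min (⌊(g a - c) / (2 * r)⌋.toNat) (k - 1) with hjf
  set ctr : ℕ → ℝ := fun j => c + 2 * r * j + r with hctr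
  set bf : AddCircle (2 * π) → AddCircle (2 * π) := fun a => ((ctr (jf a) : ℝ) : AddCircle (2 * π))
    with hbf
  refine ⟨A.image bf, hA.image bf, ?_, ?_⟩
  · -- card bound
    have hsub : A.image bf ⊆ (Finset.range k).image
        (fun j => ((ctr j : ℝ) : AddCircle (2 * π))) := by
      intro b hb
      obtain ⟨a, ha, rfl⟩ := Finset.mem_image.mp hb
      exact Finset.mem_image.mpr ⟨jf a, Finset.mem_range.mpr (by
        have : jf a ≤ k - 1 := min_le_right _ _
        omega), rfl⟩
    calc (A.image bf).card ≤ _ := Finset.card_le_card hsub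
      _ ≤ (Finset.range k).card := Finset.card_image_le
      _ = k := Finset.card_range k
  · -- Hausdorff distance
    have hdist : ∀ a ∈ A, dist a (bf a) ≤ r := by
      intro a ha
      obtain ⟨hcoe, hxl, hxr⟩ := hg a ha
      set x := g a with hxdef
      set t : ℝ := (x - c) / (2 * r) with htdef
      have h2r : (0:ℝ) < 2 * r := by linarith
      have ht0 : 0 ≤ t := div_nonneg (by linarith) h2r.le
      have htk : t ≤ k := by
        rw [htdef, div_le_iff₀ h2r]
        have : 2 * r * k = 2 * π - 2 * π / n := h2rk
        nlinarith
      have hfl0 : 0 ≤ ⌊t⌋ := Int.floor_nonneg.mpr ht0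
      have hflcast : ((⌊t⌋.toNat : ℕ) : ℝ) = (⌊t⌋ : ℝ) := by
        exact_mod_cast Int.toNat_of_nonneg hfl0
      have hjle : (jf a : ℝ) ≤ t := by
        have h1 : jf a ≤ ⌊t⌋.toNat := min_le_left _ _
        have h2 : ((jf a : ℕ) : ℝ) ≤ ((⌊t⌋.toNat : ℕ) : ℝ) := by exact_mod_cast h1
        rw [hflcast] at h2
        exact h2.trans (Int.floor_le t)
      have hjge : t ≤ (jf a : ℝ) + 1 := by
        by_cases hcase : ⌊t⌋.toNat ≤ k - 1
        · have hja : jf a = ⌊t⌋.toNat := min_eq_left hcase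
          have := Int.lt_floor_add_one t
          rw [hja, hflcast]
          linarith
        · push_neg at hcase
          have hja : jf a = k - 1 := min_eq_right hcase.le
          have : ((jf a : ℕ) : ℝ) = (k : ℝ) - 1 := by
            rw [hja, Nat.cast_sub hk]; norm_num
          rw [this]
          linarith
      have hx1 : c + 2 * r * (jf a) ≤ x := by
        have := mul_le_mul_of_nonneg_left hjle h2r.le
        rw [htdef] at this
        rw [mul_div_cancel₀ _ (ne_of_gt h2r)] at this
        linarith
      have hx2 : x ≤ c + 2 * r * (jf a) + 2 * r := by
        have := mul_le_mul_of_nonneg_left hjge h2r.le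
        rw [htdef, mul_div_cancel₀ _ (ne_of_gt h2r)] at this
        nlinarith
      have habs : |x - ctr (jf a)| ≤ r := by
        have h1 : ctr (jf a) = c + 2 * r * (jf a) + r := rfl
        rw [h1, abs_le]
        exact ⟨by linarith, by linarith⟩
      have hDle := distCoeLe hπ x (ctr (jf a))
      rw [hcoe] at hDle
      exact le_trans hDle habs
    apply hausdorffDist_le_of_mem_dist hr.le
    · intro a ha
      rw [Finset.mem_coe] at ha
      exact ⟨bf a, Finset.mem_coe.mpr (Finset.mem_image_of_mem bf ha), hdist a ha⟩
    · intro b hb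
      rw [Finset.mem_coe] at hb
      obtain ⟨a, ha, rfl⟩ := Finset.mem_image.mp hb
      exact ⟨a, Finset.mem_coe.mpr ha, by rw [dist_comm]; exact hdist a ha⟩
end

section
/- Let R ⊆ S¹ be a set of at most kn points on the unit circle (circumference 2π) that is invariant under rotation by angle 2π/k. Then R is covered by k uniformly spaced closed arcs each of length 2π(n−1)/(kn). -/
open Metric Real

private lemma gap_lemma (δ : ℝ) (hδ : 0 < δ) (n : ℕ) (hn : 1 ≤ n)
    (T : Finset ℝ) (hne : T.Nonempty) (hsub : ∀ t ∈ T, 0 ≤ t ∧ t < δ)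
    (hcardn : T.card ≤ n) :
    ∃ c₀ : ℝ, ∀ u ∈ T, ∃ e : ℤ, |u + (e : ℝ) * δ - c₀| ≤ (δ - δ / n) / 2 := by
  classical
  set m := T.card with hm
  have hm0 : 0 < m := Finset.card_pos.mpr hne
  have hmR : (0 : ℝ) < m := by exact_mod_cast hm0
  set μ := T.min' hne with hμ
  have hμT : μ ∈ T := T.min'_mem hne
  set σ : ℝ → ℝ := fun t =>
    if h : (T.filter (fun u => t < u)).Nonempty then (T.filter (fun u => t < u)).min' h
    else μ + δ with hσ
  have hσ_pos : ∀ t (h : (T.filter (fun u => t < u)).Nonempty),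
      σ t = (T.filter (fun u => t < u)).min' h := fun t h => dif_pos h
  have hσ_neg : ∀ t, ¬ (T.filter (fun u => t < u)).Nonempty → σ t = μ + δ :=
    fun t h => dif_neg h
  have hσ_gt : ∀ t ∈ T, t < σ t := by
    intro t ht
    by_cases h : (T.filter (fun u => t < u)).Nonempty
    · rw [hσ_pos t h]
      exact (Finset.mem_filter.mp (Finset.min'_mem _ h)).2
    · rw [hσ_neg t h]
      have h1 := (hsub t ht).2
      have h2 := (hsub μ hμT).1
      linarith
  have hσ_le : ∀ t, ∀ u ∈ T, t < u → σ t ≤ u := by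
    intro t u hu htu
    have h : (T.filter (fun v => t < v)).Nonempty := ⟨u, Finset.mem_filter.mpr ⟨hu, htu⟩⟩
    rw [hσ_pos t h]
    exact Finset.min'_le _ _ (Finset.mem_filter.mpr ⟨hu, htu⟩)
  have hσ_mono : ∀ t ∈ T, ∀ u ∈ T, t < u → σ t < σ u := fun t _ u hu htu =>
    lt_of_le_of_lt (hσ_le t u hu htu) (hσ_gt u hu)
  have hσ_inj : ∀ x ∈ T, ∀ y ∈ T, σ x = σ y → x = y := by
    intro x hx y hy hxy
    rcases lt_trichotomy x y with h | h | h
    · exact absurd hxy (ne_of_lt (hσ_mono x hx y hy h))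
    · exact h
    · exact absurd hxy.symm (ne_of_lt (hσ_mono y hy x hx h))
  have hσ_memT : ∀ t, (T.filter (fun u => t < u)).Nonempty → σ t ∈ T := by
    intro t h
    rw [hσ_pos t h]
    exact Finset.filter_subset _ _ (Finset.min'_mem _ h)
  have h_image : T.image σ = insert (μ + δ) (T.erase μ) := by
    apply Finset.ext; intro v
    constructor
    · intro hv
      obtain ⟨t, ht, rfl⟩ := Finset.mem_image.mp hv
      by_cases h : (T.filter (fun u => t < u)).Nonempty
      · refine Finset.mem_insert_of_mem (Finset.mem_erase.mpr ⟨?_, hσ_memT t h⟩)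
        have hle : μ ≤ t := Finset.min'_le _ _ ht
        exact ne_of_gt (lt_of_le_of_lt hle (hσ_gt t ht))
      · rw [hσ_neg t h]
        exact Finset.mem_insert_self _ _
    · intro hv
      rcases Finset.mem_insert.mp hv with hv | hv
      · subst hv
        refine Finset.mem_image.mpr ⟨T.max' hne, T.max'_mem hne, ?_⟩
        have h : ¬ (T.filter (fun u => T.max' hne < u)).Nonempty := by
          rintro ⟨u, hu⟩
          rw [Finset.mem_filter] at hu
          exact absurd (Finset.le_max' T u hu.1) (not_le.mpr hu.2)
        exact hσ_neg _ h
      · obtain ⟨hvne, hvT⟩ := Finset.mem_erase.mp hv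
        have hμv : μ < v := lt_of_le_of_ne (Finset.min'_le _ _ hvT) (Ne.symm hvne)
        set P := T.filter (fun w => w < v) with hP
        have hPne : P.Nonempty := ⟨μ, Finset.mem_filter.mpr ⟨hμT, hμv⟩⟩
        set t := P.max' hPne with htdef
        have htP : t ∈ P := P.max'_mem hPne
        rw [hP, Finset.mem_filter] at htP
        refine Finset.mem_image.mpr ⟨t, htP.1, ?_⟩
        have hfil : (T.filter (fun u => t < u)).Nonempty :=
          ⟨v, Finset.mem_filter.mpr ⟨hvT, htP.2⟩⟩
        have hle : σ t ≤ v := hσ_le t v hvT htP.2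
        rcases lt_or_eq_of_le hle with hlt | heq
        · exfalso
          have hmem : σ t ∈ P := Finset.mem_filter.mpr ⟨hσ_memT t hfil, hlt⟩
          exact absurd (Finset.le_max' P _ hmem) (not_le.mpr (hσ_gt t htP.1))
        · exact heq
  have h_sum : ∑ t ∈ T, σ t = (∑ t ∈ T, t) + δ := by
    have h1 : ∑ v ∈ T.image σ, (fun v => v) v = ∑ t ∈ T, (fun v => v) (σ t) :=
      Finset.sum_image hσ_inj
    simp only [] at h1
    rw [← h1]
    have h2 : (μ + δ) ∉ T.erase μ := by
      intro hmem
      have h3 := (hsub _ (Finset.mem_of_mem_erase hmem)).2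
      have h4 := (hsub μ hμT).1
      linarith
    rw [h_image, Finset.sum_insert h2]
    have h5 : (∑ x ∈ T.erase μ, x) + μ = ∑ x ∈ T, x :=
      Finset.sum_erase_add T _ hμT
    linarith
  have hgap : ∃ t ∈ T, δ / m ≤ σ t - t := by
    by_contra hcon
    push_neg at hcon
    have hlt : ∑ t ∈ T, (σ t - t) < ∑ _t ∈ T, δ / m :=
      Finset.sum_lt_sum_of_nonempty hne (fun t ht => hcon t ht)
    rw [Finset.sum_sub_distrib, h_sum, Finset.sum_const, nsmul_eq_mul] at hlt
    rw [mul_div_cancel₀ _ (ne_of_gt hmR)] at hlt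
    linarith
  obtain ⟨t, htT, hgapt⟩ := hgap
  have hδn : δ / n ≤ δ / m := by
    apply div_le_div_of_nonneg_left hδ.le hmR
    exact_mod_cast hcardn
  set b := σ t with hb
  refine ⟨(b + (t + δ)) / 2, ?_⟩
  intro u huT
  have hu0 := (hsub u huT).1
  have huδ := (hsub u huT).2
  have ht0 := (hsub t htT).1
  have hbu : b ≤ u + δ := by
    by_cases h : (T.filter (fun w => t < w)).Nonempty
    · have hbT : b ∈ T := hσ_memT t h
      have := (hsub b hbT).2
      linarith
    · have hbeq : b = μ + δ := hσ_neg t h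
      have : μ ≤ u := Finset.min'_le _ _ huT
      linarith
  rcases le_or_gt u t with h | h
  · refine ⟨1, ?_⟩
    rw [abs_le]
    push_cast
    constructor <;> linarith
  · refine ⟨0, ?_⟩
    have hbuu : b ≤ u := hσ_le t u huT h
    rw [abs_le]
    push_cast
    constructor <;> linarith

/-- A set of at most `k*n` points on the circle of circumference `2π`, invariant under
rotation by `2π/k`, is covered by `k` uniformly spaced closed arcs of length
`2π(n-1)/(kn)` (i.e. closed balls of radius `π(n-1)/(kn)` centered at `k` uniformly
spaced points). -/
theorem stmt6 (n k : ℕ) (hn : 1 ≤ n) (hk : 1 ≤ k)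
    (R : Finset (AddCircle (2 * π))) (hcard : R.card ≤ k * n)
    (hinv : ∀ x ∈ R, x + ((2 * π / k : ℝ) : AddCircle (2 * π)) ∈ R) :
    ∃ c : AddCircle (2 * π),
      (R : Set (AddCircle (2 * π))) ⊆
        ⋃ j ∈ Finset.range k,
          closedBall (c + ((j * (2 * π / k) : ℝ) : AddCircle (2 * π)))
            (π * (n - 1) / (k * n)) := by
  classical
  haveI hfact : Fact (0 < 2 * π) := ⟨by positivity⟩
  have hπ : 0 < π := Real.pi_pos
  have hk0 : (0 : ℝ) < k := by exact_mod_cast hk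
  have hn0 : (0 : ℝ) < n := by exact_mod_cast hn
  set δ : ℝ := 2 * π / k with hδdef
  have hδ : 0 < δ := by positivity
  have hkδ : (k : ℝ) * δ = 2 * π := by
    rw [hδdef]; field_simp
  rcases R.eq_empty_or_nonempty with hR | hR
  · exact ⟨0, by simp [hR]⟩
  set ℓ : AddCircle (2 * π) → ℝ := fun x => ((AddCircle.equivIco (2 * π) 0 x : ℝ)) with hℓ
  have hℓ_coe : ∀ x : AddCircle (2 * π), ((ℓ x : ℝ) : AddCircle (2 * π)) = x :=
    fun x => (AddCircle.equivIco (2 * π) 0).symm_apply_apply x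
  have hℓ_mem : ∀ x : AddCircle (2 * π), ℓ x ∈ Set.Ico (0 : ℝ) (0 + 2 * π) :=
    fun x => (AddCircle.equivIco (2 * π) 0 x).2
  have hmod : ∀ a b : ℝ, (a : AddCircle (2 * π)) = (b : AddCircle (2 * π)) →
      toIcoMod hδ 0 a = toIcoMod hδ 0 b := by
    intro a b hab
    rw [QuotientAddGroup.eq_iff_sub_mem] at hab
    obtain ⟨z, hz⟩ := AddSubgroup.mem_zmultiples_iff.mp hab
    have hab' : a = b + (z * k : ℤ) • δ := by
      have hz' : (z : ℝ) * (2 * π) = a - b := by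
        rw [← hz]; push_cast [zsmul_eq_mul]; ring
      push_cast [zsmul_eq_mul]
      rw [mul_assoc, hkδ]
      linarith
    rw [hab', toIcoMod_add_zsmul]
  set g : AddCircle (2 * π) → ℝ := fun x => toIcoMod hδ 0 (ℓ x) with hg
  set T : Finset ℝ := R.image g with hT
  -- each fiber of g on R has at least k elements
  have hfiber : ∀ u ∈ T, k ≤ (R.filter (fun x => g x = u)).card := by
    intro u hu
    obtain ⟨x, hxR, rfl⟩ := Finset.mem_image.mp hu
    have horbit : ∀ j : ℕ, x + ((j * δ : ℝ) : AddCircle (2 * π)) ∈ R := by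
      intro j
      induction j with
      | zero => simpa using hxR
      | succ i ih =>
        have h1 : (((i + 1 : ℕ) * δ : ℝ) : AddCircle (2 * π)) =
            ((i * δ : ℝ) : AddCircle (2 * π)) + ((δ : ℝ) : AddCircle (2 * π)) := by
          rw [← QuotientAddGroup.mk_add]
          push_cast
          ring_nf
        rw [h1, ← add_assoc]
        exact hinv _ ih
    have hgorbit : ∀ j : ℕ, g (x + ((j * δ : ℝ) : AddCircle (2 * π))) = g x := by
      intro j
      have h2 : ((ℓ (x + ((j * δ : ℝ) : AddCircle (2 * π))) : ℝ) : AddCircle (2 * π)) =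
          ((ℓ x + j * δ : ℝ) : AddCircle (2 * π)) := by
        rw [hℓ_coe, QuotientAddGroup.mk_add, hℓ_coe]
      have h3 := hmod _ _ h2
      have h4 : ℓ x + (j : ℝ) * δ = ℓ x + (j : ℤ) • δ := by push_cast [zsmul_eq_mul]; ring
      rw [hg]
      simp only []
      rw [h3, h4, toIcoMod_add_zsmul]
    have hmaps : ∀ j ∈ Finset.range k,
        (x + ((j * δ : ℝ) : AddCircle (2 * π))) ∈ R.filter (fun y => g y = g x) := by
      intro j _
      exact Finset.mem_filter.mpr ⟨horbit j, hgorbit j⟩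
    have hinj : Set.InjOn (fun j : ℕ => x + ((j * δ : ℝ) : AddCircle (2 * π)))
        (Finset.range k : Finset ℕ) := by
      intro i hi j hj hij
      simp only [Finset.coe_range, Set.mem_Iio] at hi hj
      have h5 : (((i : ℕ) * δ : ℝ) : AddCircle (2 * π)) = (((j : ℕ) * δ : ℝ) : AddCircle (2 * π)) :=
        add_left_cancel hij
      have hiIco : ((i : ℝ) * δ) ∈ Set.Ico (0 : ℝ) (0 + 2 * π) := by
        constructor
        · positivity
        · rw [zero_add, ← hkδ]
          have : (i : ℝ) < k := by exact_mod_cast hi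
          nlinarith
      have hjIco : ((j : ℝ) * δ) ∈ Set.Ico (0 : ℝ) (0 + 2 * π) := by
        constructor
        · positivity
        · rw [zero_add, ← hkδ]
          have : (j : ℝ) < k := by exact_mod_cast hj
          nlinarith
      have h6 : (i : ℝ) * δ = (j : ℝ) * δ :=
        (AddCircle.coe_eq_coe_iff_of_mem_Ico hiIco hjIco).mp h5
      have : (i : ℝ) = j := mul_right_cancel₀ (ne_of_gt hδ) h6
      exact_mod_cast this
    have h7 : (Finset.range k).card ≤ (R.filter (fun y => g y = g x)).card :=
      Finset.card_le_card_of_injOn _ hmaps hinj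
    simpa using h7
  have hcardT : T.card ≤ n := by
    have h8 : k * T.card ≤ R.card :=
      Finset.mul_card_image_le_card_of_maps_to
        (fun a ha => Finset.mem_image_of_mem g ha) k hfiber
    exact Nat.le_of_mul_le_mul_left (le_trans h8 hcard) hk
  obtain ⟨x0, hx0⟩ := hR
  have hTne : T.Nonempty := ⟨g x0, Finset.mem_image_of_mem g hx0⟩
  have hTsub : ∀ t ∈ T, 0 ≤ t ∧ t < δ := by
    intro t ht
    obtain ⟨x, _, rfl⟩ := Finset.mem_image.mp ht
    have h9 := toIcoMod_mem_Ico hδ 0 (ℓ x)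
    rw [zero_add] at h9
    exact ⟨h9.1, h9.2⟩
  obtain ⟨c₀, hc₀⟩ := gap_lemma δ hδ n hn T hTne hTsub hcardT
  have hrad : (δ - δ / n) / 2 = π * (n - 1) / (k * n) := by
    rw [hδdef]
    field_simp
  refine ⟨(c₀ : AddCircle (2 * π)), ?_⟩
  intro x hxR
  rw [Finset.mem_coe] at hxR
  obtain ⟨e, he⟩ := hc₀ (g x) (Finset.mem_image_of_mem g hxR)
  set q : ℤ := toIcoDiv hδ 0 (ℓ x) with hq
  have hℓx : ℓ x = g x + (q : ℝ) * δ := by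
    have h10 : g x = ℓ x - q • δ := rfl
    rw [h10]
    push_cast [zsmul_eq_mul]
    ring
  set J : ℤ := q - e with hJ
  set j : ℕ := (J % k).toNat with hjdef
  have hk0' : (0 : ℤ) < (k : ℤ) := by exact_mod_cast hk
  have hmod0 : 0 ≤ J % (k : ℤ) := Int.emod_nonneg J (ne_of_gt hk0')
  have hmodk : J % (k : ℤ) < k := Int.emod_lt_of_pos J hk0'
  have hjZ : (j : ℤ) = J % k := Int.toNat_of_nonneg hmod0
  have hjk : j < k := by omega
  have hcenter : (c₀ : AddCircle (2 * π)) + ((j * δ : ℝ) : AddCircle (2 * π)) =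
      ((c₀ + (J : ℝ) * δ : ℝ) : AddCircle (2 * π)) := by
    rw [← QuotientAddGroup.mk_add]
    rw [QuotientAddGroup.eq_iff_sub_mem]
    refine AddSubgroup.mem_zmultiples_iff.mpr ⟨-(J / k), ?_⟩
    have hdiv : (k : ℤ) * (J / k) + J % k = J := Int.mul_ediv_add_emod J k
    have hjJ : (j : ℝ) - (J : ℝ) = -((J / k : ℤ) : ℝ) * k := by
      have : (j : ℤ) - J = -(J / k) * k := by rw [hjZ]; linear_combination hdiv
      exact_mod_cast this
    push_cast [zsmul_eq_mul]
    have : ((j : ℝ) - J) * δ = -((J / k : ℤ) : ℝ) * (2 * π) := by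
      rw [hjJ, ← hkδ]; ring
    nlinarith [this]
  have hdist : dist x ((c₀ : AddCircle (2 * π)) + ((j * δ : ℝ) : AddCircle (2 * π))) ≤
      π * (n - 1) / (k * n) := by
    rw [hcenter, ← hℓ_coe x, dist_eq_norm, ← QuotientAddGroup.mk_sub]
    have h11 : ‖((ℓ x - (c₀ + (J : ℝ) * δ) : ℝ) : AddCircle (2 * π))‖ ≤
        |ℓ x - (c₀ + (J : ℝ) * δ)| := by
      have := QuotientAddGroup.norm_mk_le_norm (S := AddSubgroup.zmultiples (2 * π)) (m := ℓ x - (c₀ + (J : ℝ) * δ))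
      simpa using this
    refine le_trans h11 ?_
    have h12 : ℓ x - (c₀ + (J : ℝ) * δ) = g x + (e : ℝ) * δ - c₀ := by
      rw [hℓx, hJ]
      push_cast
      ring
    rw [h12, ← hrad]
    exact he
  refine Set.mem_iUnion₂.mpr ⟨j, Finset.mem_range.mpr hjk, ?_⟩
  exact Metric.mem_closedBall.mpr hdist
end

section
/- Let 0 ≤ c < 1 and let A, B be nonempty finite subsets of [0, 1 + c/2] ∪ [2 − c/2, 2] such that each of A, B meets [2 − c/2, 2], and set s(A) = A ∩ [0, 1 + c/2], s(B) = B ∩ [0, 1 + c/2], assumed nonempty. If d_H(A, B) < 1 − c, then d_H(s(A), s(B)) ≤ d_H(A, B). -/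
open Metric Set

private lemma aux12 (c : ℝ) (hc1 : c < 1)
    (A B : Finset ℝ) (hA : A.Nonempty) (hB : B.Nonempty)
    (hBsub : (B : Set ℝ) ⊆ Icc 0 (1 + c / 2) ∪ Icc (2 - c / 2) 2)
    (hd : hausdorffDist (A : Set ℝ) (B : Set ℝ) < 1 - c) :
    ∀ x ∈ (A : Set ℝ) ∩ Icc 0 (1 + c / 2),
      infDist x ((B : Set ℝ) ∩ Icc 0 (1 + c / 2)) ≤
        hausdorffDist (A : Set ℝ) (B : Set ℝ) := by
  rintro x ⟨hxA, hx0, hx1⟩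
  have hne : EMetric.hausdorffEdist (A : Set ℝ) (B : Set ℝ) ≠ ⊤ :=
    hausdorffEdist_ne_top_of_nonempty_of_bounded (by exact_mod_cast hA)
      (by exact_mod_cast hB) (A.finite_toSet.isBounded) (B.finite_toSet.isBounded)
  have hinf : infDist x (B : Set ℝ) ≤ hausdorffDist (A : Set ℝ) (B : Set ℝ) :=
    infDist_le_hausdorffDist_of_mem hxA hne
  obtain ⟨b, hbB, hbd⟩ := (B.finite_toSet.isCompact).exists_infDist_eq_dist
    (by exact_mod_cast hB) x
  have hdb : dist x b ≤ hausdorffDist (A : Set ℝ) (B : Set ℝ) := by rw [← hbd]; exact hinf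
  have hbIcc : b ∈ Icc 0 (1 + c / 2) := by
    rcases hBsub hbB with h | h
    · exact h
    · exfalso
      have : (1 : ℝ) - c ≤ dist x b := by
        rw [Real.dist_eq, abs_sub_comm]
        have : 1 - c ≤ b - x := by linarith [h.1]
        exact this.trans (le_abs_self _)
      linarith [hdb.trans_lt hd]
  calc infDist x ((B : Set ℝ) ∩ Icc 0 (1 + c / 2)) ≤ dist x b :=
        infDist_le_dist_of_mem ⟨hbB, hbIcc⟩
    _ ≤ _ := hdb

theorem stmt12 (c : ℝ) (hc0 : 0 ≤ c) (hc1 : c < 1)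
    (A B : Finset ℝ) (hA : A.Nonempty) (hB : B.Nonempty)
    (hAsub : (A : Set ℝ) ⊆ Icc 0 (1 + c / 2) ∪ Icc (2 - c / 2) 2)
    (hBsub : (B : Set ℝ) ⊆ Icc 0 (1 + c / 2) ∪ Icc (2 - c / 2) 2)
    (hAmeets : ∃ a ∈ A, a ∈ Icc (2 - c / 2) 2)
    (hBmeets : ∃ b ∈ B, b ∈ Icc (2 - c / 2) 2)
    (hsA : ((A : Set ℝ) ∩ Icc 0 (1 + c / 2)).Nonempty)
    (hsB : ((B : Set ℝ) ∩ Icc 0 (1 + c / 2)).Nonempty)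
    (hd : hausdorffDist (A : Set ℝ) (B : Set ℝ) < 1 - c) :
    hausdorffDist ((A : Set ℝ) ∩ Icc 0 (1 + c / 2)) ((B : Set ℝ) ∩ Icc 0 (1 + c / 2)) ≤
      hausdorffDist (A : Set ℝ) (B : Set ℝ) := by
  have hd' : hausdorffDist (B : Set ℝ) (A : Set ℝ) < 1 - c := by
    rwa [hausdorffDist_comm]
  exact hausdorffDist_le_of_infDist hausdorffDist_nonneg
    (aux12 c hc1 A B hA hB hBsub hd)
    (fun x hx => ((aux12 c hc1 B A hB hA hAsub hd') x hx).trans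
      (le_of_eq (hausdorffDist_comm ..)))
end

section
/- Let X be a metric space, n ≥ 2, and r : X(n) → X(n−1) an L-Lipschitz retraction. Then for every A ∈ X(n) one has d_H(r(A), A) ≤ (L+1)·δ_n(A), and if X is geodesic, d_H(r(A), A) ≤ (L+1)·δ_n(A)/2. -/
open Metric Set

private lemma edist_fin {X : Type*} [MetricSpace X] (A B : Finset X)
    (hA : A.Nonempty) (hB : B.Nonempty) :
    EMetric.hausdorffEdist (A : Set X) (B : Set X) ≠ ⊤ :=
  Metric.hausdorffEdist_ne_top_of_nonempty_of_bounded
    (Finset.coe_nonempty.mpr hA) (Finset.coe_nonempty.mpr hB)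
    A.finite_toSet.isBounded B.finite_toSet.isBounded

private lemma key_lemma {X : Type*} [MetricSpace X] (n : ℕ) (hn : 2 ≤ n)
    (L : ℝ) (r : Finset X → Finset X)
    (hmaps : ∀ A : Finset X, A.Nonempty → A.card ≤ n → (r A).Nonempty ∧ (r A).card ≤ n - 1)
    (hretr : ∀ B : Finset X, B.Nonempty → B.card ≤ n - 1 → r B = B)
    (hlip : ∀ A B : Finset X, A.Nonempty → A.card ≤ n → B.Nonempty → B.card ≤ n →
      hausdorffDist (r A : Set X) (r B : Set X) ≤ L * hausdorffDist (A : Set X) (B : Set X))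
    (A B : Finset X) (hA : A.Nonempty) (hcard : A.card ≤ n)
    (hB : B.Nonempty) (hBcard : B.card ≤ n - 1) (c : ℝ) (hc : 0 ≤ c) (hL : 0 ≤ L)
    (hAB : hausdorffDist (A : Set X) (B : Set X) ≤ c) :
    hausdorffDist (r A : Set X) (A : Set X) ≤ (L + 1) * c := by
  have hBn : B.card ≤ n := hBcard.trans (Nat.sub_le n 1)
  have hrB : r B = B := hretr B hB hBcard
  have hrA := hmaps A hA hcard
  have h1 : hausdorffDist (r A : Set X) (A : Set X) ≤
      hausdorffDist (r A : Set X) (B : Set X) + hausdorffDist (B : Set X) (A : Set X) :=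
    hausdorffDist_triangle (edist_fin (r A) B hrA.1 hB)
  have h2 : hausdorffDist (r A : Set X) (B : Set X) ≤ L * c := by
    have := hlip A B hA hcard hB hBn
    rw [hrB] at this
    exact this.trans (mul_le_mul_of_nonneg_left hAB hL)
  have h3 : hausdorffDist (B : Set X) (A : Set X) ≤ c := by
    rwa [hausdorffDist_comm] at hAB
  nlinarith

theorem stmt15 {X : Type*} [MetricSpace X] (n : ℕ) (hn : 2 ≤ n)
    (L : ℝ) (r : Finset X → Finset X)
    (hmaps : ∀ A : Finset X, A.Nonempty → A.card ≤ n → (r A).Nonempty ∧ (r A).card ≤ n - 1)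
    (hretr : ∀ B : Finset X, B.Nonempty → B.card ≤ n - 1 → r B = B)
    (hlip : ∀ A B : Finset X, A.Nonempty → A.card ≤ n → B.Nonempty → B.card ≤ n →
      hausdorffDist (r A : Set X) (r B : Set X) ≤ L * hausdorffDist (A : Set X) (B : Set X)) :
    (∀ A : Finset X, A.Nonempty → A.card ≤ n →
      hausdorffDist (r A : Set X) (A : Set X) ≤ (L + 1) * minSep n A) ∧
    ((∀ p q : X, ∃ γ : ℝ → X, γ 0 = p ∧ γ 1 = q ∧
        ∀ s ∈ Icc (0:ℝ) 1, ∀ t ∈ Icc (0:ℝ) 1, dist (γ s) (γ t) = |s - t| * dist p q) →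
      ∀ A : Finset X, A.Nonempty → A.card ≤ n →
        hausdorffDist (r A : Set X) (A : Set X) ≤ (L + 1) * minSep n A / 2) := by
  classical
  have hn1 : 1 ≤ n - 1 := by omega
  -- trivial case : card ≠ n
  have trivial_case : ∀ A : Finset X, A.Nonempty → A.card ≤ n → A.card ≠ n →
      hausdorffDist (r A : Set X) (A : Set X) = 0 ∧ minSep n A = 0 := by
    intro A hA hcard hne
    have h1 : A.card ≤ n - 1 := by omega
    rw [hretr A hA h1, minSep, if_neg hne]
    exact ⟨hausdorffDist_self_zero, rfl⟩
  -- structure of minSep in the card = n case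
  have sep_facts : ∀ A : Finset X, A.card = n →
      (∃ p ∈ A, ∃ q ∈ A, p ≠ q ∧ dist p q = minSep n A) ∧
      (∀ p ∈ A, ∀ q ∈ A, p ≠ q → minSep n A ≤ dist p q) := by
    intro A hcn
    set S : Set ℝ := {d : ℝ | ∃ p ∈ A, ∃ q ∈ A, p ≠ q ∧ dist p q = d} with hS
    have hfin : S.Finite := by
      apply Set.Finite.subset ((A.finite_toSet.prod A.finite_toSet).image
        (fun pq : X × X => dist pq.1 pq.2))
      rintro d ⟨p, hp, q, hq, _, rfl⟩
      exact ⟨(p, q), ⟨hp, hq⟩, rfl⟩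
    have hne : S.Nonempty := by
      obtain ⟨p, hp, q, hq, hpq⟩ := Finset.one_lt_card.mp (by omega : 1 < A.card)
      exact ⟨dist p q, p, hp, q, hq, hpq, rfl⟩
    have hmem : sInf S ∈ S := hne.csInf_mem hfin
    have hmin : minSep n A = sInf S := by rw [minSep, if_pos hcn]
    constructor
    · rw [hmin]; exact hmem
    · intro p hp q hq hpq
      rw [hmin]
      exact csInf_le hfin.bddBelow ⟨p, hp, q, hq, hpq, rfl⟩
  -- L is positive when there are two distinct points
  have hLpos : ∀ p q : X, p ≠ q → 0 ≤ L := by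
    intro p q hpq
    have h1 : ({p} : Finset X).Nonempty := Finset.singleton_nonempty p
    have h2 : ({q} : Finset X).Nonempty := Finset.singleton_nonempty q
    have hc1 : ({p} : Finset X).card ≤ n - 1 := by simp; omega
    have hc2 : ({q} : Finset X).card ≤ n - 1 := by simp; omega
    have hlip' := hlip {p} {q} h1 (hc1.trans (Nat.sub_le n 1)) h2 (hc2.trans (Nat.sub_le n 1))
    rw [hretr _ h1 hc1, hretr _ h2 hc2] at hlip'
    have hlow : dist p q ≤ hausdorffDist (({p} : Finset X) : Set X) (({q} : Finset X) : Set X) := by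
      have := infDist_le_hausdorffDist_of_mem (by simp : p ∈ (({p} : Finset X) : Set X))
        (edist_fin {p} {q} h1 h2)
      simpa using this
    have hdpos : 0 < dist p q := dist_pos.mpr hpq
    by_contra h
    push_neg at h
    have := mul_nonpos_of_nonpos_of_nonneg h.le (hausdorffDist_nonneg (s := (({p} : Finset X) : Set X)) (t := (({q} : Finset X) : Set X)))
    linarith
  constructor
  · intro A hA hcard
    by_cases hcn : A.card = n
    · obtain ⟨⟨p, hp, q, hq, hpq, hd⟩, hlb⟩ := sep_facts A hcn
      have hδ : 0 ≤ minSep n A := hd ▸ dist_nonneg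
      have hL : 0 ≤ L := hLpos p q hpq
      set B := A.erase q with hB
      have hBne : B.Nonempty := ⟨p, Finset.mem_erase.mpr ⟨hpq, hp⟩⟩
      have hBcard : B.card ≤ n - 1 := by
        rw [hB, Finset.card_erase_of_mem hq]; omega
      refine key_lemma n hn L r hmaps hretr hlip A B hA hcard hBne hBcard _ hδ hL ?_
      apply hausdorffDist_le_of_mem_dist hδ
      · intro x hx
        simp only [Finset.mem_coe] at hx
        by_cases hxq : x = q
        · refine ⟨p, Finset.mem_coe.mpr (Finset.mem_erase.mpr ⟨hpq, hp⟩), ?_⟩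
          rw [hxq, dist_comm, hd]
        · exact ⟨x, Finset.mem_coe.mpr (Finset.mem_erase.mpr ⟨hxq, hx⟩), by simp only [dist_self]; exact hδ⟩
      · intro x hx
        simp only [Finset.mem_coe, hB, Finset.mem_erase] at hx
        exact ⟨x, Finset.mem_coe.mpr hx.2, by simp only [dist_self]; exact hδ⟩
    · obtain ⟨h1, h2⟩ := trivial_case A hA hcard hcn
      rw [h1, h2, mul_zero]
  · intro hgeo A hA hcard
    by_cases hcn : A.card = n
    · obtain ⟨⟨p, hp, q, hq, hpq, hd⟩, hlb⟩ := sep_facts A hcn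
      have hδ : 0 ≤ minSep n A := hd ▸ dist_nonneg
      have hL : 0 ≤ L := hLpos p q hpq
      obtain ⟨γ, hγ0, hγ1, hγd⟩ := hgeo p q
      set m := γ (1/2) with hm
      have hmem0 : (0:ℝ) ∈ Icc (0:ℝ) 1 := by norm_num
      have hmem1 : (1:ℝ) ∈ Icc (0:ℝ) 1 := by norm_num
      have hmemh : (1/2:ℝ) ∈ Icc (0:ℝ) 1 := by norm_num
      have hpm : dist p m = minSep n A / 2 := by
        have := hγd 0 hmem0 (1/2) hmemh
        rw [hγ0, hd] at this
        rw [hm, this, show |(0:ℝ) - 1/2| = 1/2 by norm_num]; ring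
      have hqm : dist q m = minSep n A / 2 := by
        have := hγd 1 hmem1 (1/2) hmemh
        rw [hγ1, hd] at this
        rw [hm, this, show |(1:ℝ) - 1/2| = 1/2 by norm_num]; ring
      set B := insert m ((A.erase p).erase q) with hB
      have hmB : m ∈ B := Finset.mem_insert_self _ _
      have hBne : B.Nonempty := ⟨m, hmB⟩
      have hBcard : B.card ≤ n - 1 := by
        have h1 : ((A.erase p).erase q).card ≤ n - 2 := by
          have := Finset.card_erase_le (a := q) (s := A.erase p)
          have := Finset.card_erase_of_mem hp
          have hq' : q ∈ A.erase p := Finset.mem_erase.mpr ⟨fun h => hpq h.symm, hq⟩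
          rw [Finset.card_erase_of_mem hq', Finset.card_erase_of_mem hp]
          omega
        calc B.card ≤ ((A.erase p).erase q).card + 1 := Finset.card_insert_le _ _
          _ ≤ n - 1 := by omega
      have hδ2 : 0 ≤ minSep n A / 2 := by linarith
      have key := key_lemma n hn L r hmaps hretr hlip A B hA hcard hBne hBcard
        (minSep n A / 2) hδ2 hL ?_
      · calc hausdorffDist (r A : Set X) (A : Set X) ≤ (L + 1) * (minSep n A / 2) := key
          _ = (L + 1) * minSep n A / 2 := by ring
      apply hausdorffDist_le_of_mem_dist hδ2
      · intro x hx
        simp only [Finset.mem_coe] at hx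
        by_cases hxp : x = p
        · exact ⟨m, Finset.mem_coe.mpr hmB, by rw [hxp, hpm]⟩
        by_cases hxq : x = q
        · exact ⟨m, Finset.mem_coe.mpr hmB, by rw [hxq, hqm]⟩
        · refine ⟨x, Finset.mem_coe.mpr ?_, by simp only [dist_self]; exact hδ2⟩
          exact Finset.mem_insert_of_mem (Finset.mem_erase.mpr ⟨hxq, Finset.mem_erase.mpr ⟨hxp, hx⟩⟩)
      · intro x hx
        simp only [Finset.mem_coe] at hx
        rcases Finset.mem_insert.mp hx with h | h
        · refine ⟨p, Finset.mem_coe.mpr hp, ?_⟩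
          rw [h, dist_comm, hpm]
        · simp only [Finset.mem_erase] at h
          exact ⟨x, Finset.mem_coe.mpr h.2.2, by simp only [dist_self]; exact hδ2⟩
    · obtain ⟨h1, h2⟩ := trivial_case A hA hcard hcn
      rw [h1, h2, mul_zero]
      norm_num
end
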